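/- Let ρ₁,…,ρₙ be positive definite density matrices, p a probability vector with all pᵢ > 0, and suppose a positive definite density matrix σ satisfies σ = (1/f(σ)) Σᵢ pᵢ √(σ^{1/2} ρᵢ σ^{1/2}) where f(σ) = Σᵢ pᵢ F(ρᵢ,σ). If additionally every ρᵢ commutes with σ, then σ = C²/Tr(C²) with C = Σᵢ pᵢ ρᵢ^{1/2}. -/

import Mathlib

open Matrix BigOperators Finset ComplexOrder

variable {d n : ℕ}

open Classical in
/-- The positive semidefinite square root (zero if not PSD). -/
noncomputable def psqrt (A : Matrix (Fin d) (Fin d) ℂ) : Matrix (Fin d) (Fin d) ℂ :=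
  if h : A.PosSemidef then (h.1.eigenvectorUnitary : Matrix (Fin d) (Fin d) ℂ) *
    diagonal ((↑) ∘ Real.sqrt ∘ h.1.eigenvalues) *
    (star h.1.eigenvectorUnitary : Matrix (Fin d) (Fin d) ℂ) else 0

/-- Trace norm ‖A‖₁ = Tr √(A*A). -/
noncomputable def traceNorm (A : Matrix (Fin d) (Fin d) ℂ) : ℝ :=
  ((psqrt (Aᴴ * A)).trace).re

/-- Fidelity F(ρ,σ) = Tr √(σ^{1/2} ρ σ^{1/2}). -/
noncomputable def fid (ρ σ : Matrix (Fin d) (Fin d) ℂ) : ℝ :=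
  ((psqrt (psqrt σ * ρ * psqrt σ)).trace).re

/-- Density matrix: positive semidefinite with unit trace. -/
def IsDensity (ρ : Matrix (Fin d) (Fin d) ℂ) : Prop := ρ.PosSemidef ∧ ρ.trace = 1

/-- Contraction: spectral norm at most one, i.e. 1 - UᴴU ⪰ 0. -/
def IsContraction (U : Matrix (Fin d) (Fin d) ℂ) : Prop := (1 - Uᴴ * U).PosSemidef

/-- Probability vector. -/
def IsProbVec (p : Fin n → ℝ) : Prop := (∀ i, 0 ≤ p i) ∧ ∑ i, p i = 1

/-- The positive semidefinite square root of a PSD matrix. -/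
noncomputable def Matrix.PosSemidef.sqrt {d : ℕ} {A : Matrix (Fin d) (Fin d) ℂ}
    (hA : A.PosSemidef) : Matrix (Fin d) (Fin d) ℂ :=
  (hA.1.eigenvectorUnitary : Matrix (Fin d) (Fin d) ℂ) *
    diagonal (RCLike.ofReal ∘ Real.sqrt ∘ hA.1.eigenvalues) *
    (star hA.1.eigenvectorUnitary : Matrix (Fin d) (Fin d) ℂ)

open scoped MatrixOrder in
lemma Matrix.PosSemidef.sqrt_eq_cfcSqrt {d : ℕ} {A : Matrix (Fin d) (Fin d) ℂ}
    (hA : A.PosSemidef) : hA.sqrt = CFC.sqrt A := by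
  rw [CFC.sqrt_eq_cfc, cfc_nnreal_eq_real _ A hA.nonneg, hA.1.cfc_eq]
  simp only [IsHermitian.cfc, Unitary.conjStarAlgAut_apply]
  rw [Matrix.PosSemidef.sqrt]
  congr 3
  funext i
  simp [hA.eigenvalues_nonneg i]

open scoped MatrixOrder in
lemma Matrix.PosSemidef.posSemidef_sqrt {d : ℕ} {A : Matrix (Fin d) (Fin d) ℂ}
    (hA : A.PosSemidef) : hA.sqrt.PosSemidef := by
  rw [hA.sqrt_eq_cfcSqrt]
  exact Matrix.nonneg_iff_posSemidef.mp (CFC.sqrt_nonneg A)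

open scoped MatrixOrder in
lemma Matrix.PosSemidef.sqrt_mul_self {d : ℕ} {A : Matrix (Fin d) (Fin d) ℂ}
    (hA : A.PosSemidef) : hA.sqrt * hA.sqrt = A := by
  rw [hA.sqrt_eq_cfcSqrt]
  exact CFC.sqrt_mul_sqrt_self A hA.nonneg

open scoped MatrixOrder in
lemma Matrix.PosSemidef.eq_sqrt_of_sq_eq {d : ℕ} {A B : Matrix (Fin d) (Fin d) ℂ}
    (hA : A.PosSemidef) (hB : B.PosSemidef) (hAB : A ^ 2 = B) : A = hB.sqrt := by
  rw [hB.sqrt_eq_cfcSqrt]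
  exact (CFC.sqrt_unique (by rw [← sq]; exact hAB) hA.nonneg).symm

lemma sqrt_commute_of_commute {d : ℕ} {A B : Matrix (Fin d) (Fin d) ℂ}
    (hA : A.PosSemidef) (h : Commute A B) : Commute hA.sqrt B := by
  set U : Matrix (Fin d) (Fin d) ℂ := (hA.1.eigenvectorUnitary : Matrix (Fin d) (Fin d) ℂ) with hU
  have hUU : U * star U = 1 := by rw [hU]; exact Unitary.coe_mul_star_self _
  have hsUU : star U * U = 1 := by rw [hU]; exact Unitary.coe_star_mul_self _
  have hcancel : ∀ Z : Matrix (Fin d) (Fin d) ℂ, U * (star U * Z) = Z := fun Z => by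
    rw [← Matrix.mul_assoc, hUU, Matrix.one_mul]
  have hcancel' : ∀ Z : Matrix (Fin d) (Fin d) ℂ, star U * (U * Z) = Z := fun Z => by
    rw [← Matrix.mul_assoc, hsUU, Matrix.one_mul]
  set M : Matrix (Fin d) (Fin d) ℂ := star U * B * U with hM
  have hBeq : B = U * M * star U := by
    rw [hM]
    simp only [Matrix.mul_assoc, hcancel, hUU, Matrix.mul_one]
  have h1 : star U * A * U = diagonal (RCLike.ofReal ∘ hA.1.eigenvalues) :=
    by have := hA.1.conjStarAlgAut_star_eigenvectorUnitary
       rwa [Unitary.conjStarAlgAut_star_apply] at this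
  have hD : diagonal (RCLike.ofReal ∘ hA.1.eigenvalues) * M
      = M * diagonal (RCLike.ofReal ∘ hA.1.eigenvalues) := by
    rw [← h1, hM]
    simp only [Matrix.mul_assoc, hcancel]
    rw [← Matrix.mul_assoc A, ← Matrix.mul_assoc B, h.eq]
  have hE : diagonal (RCLike.ofReal ∘ Real.sqrt ∘ hA.1.eigenvalues) * M
      = M * diagonal (RCLike.ofReal ∘ Real.sqrt ∘ hA.1.eigenvalues) := by
    ext i j
    have hij := congrFun (congrFun hD i) j
    rw [Matrix.diagonal_mul, Matrix.mul_diagonal] at hij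
    rw [Matrix.diagonal_mul, Matrix.mul_diagonal]
    rcases eq_or_ne (M i j) 0 with h0 | h0
    · simp [h0]
    · rw [mul_comm (M i j)] at hij
      have hcc := mul_right_cancel₀ h0 hij
      simp only [Function.comp_apply] at hcc
      have hreal : hA.1.eigenvalues i = hA.1.eigenvalues j := by exact_mod_cast hcc
      simp [Function.comp_apply, hreal, mul_comm]
  show hA.sqrt * B = B * hA.sqrt
  rw [Matrix.PosSemidef.sqrt, hBeq, ← hU]
  simp only [Matrix.mul_assoc, hcancel']
  rw [← Matrix.mul_assoc (diagonal _) M, hE, Matrix.mul_assoc]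

lemma posSemidef_mul_of_commute {d : ℕ} {A B : Matrix (Fin d) (Fin d) ℂ}
    (hA : A.PosSemidef) (hB : B.PosSemidef) (h : Commute A B) : (A * B).PosSemidef := by
  have hc : Commute hA.sqrt B := sqrt_commute_of_commute hA h
  have hrw : A * B = hA.sqrt * B * hA.sqrtᴴ := by
    rw [hA.posSemidef_sqrt.1.eq, Matrix.mul_assoc, ← hc.eq, ← Matrix.mul_assoc,
      hA.sqrt_mul_self]
  rw [hrw]
  exact hB.mul_mul_conjTranspose_same hA.sqrt

/-- A positive definite fixed point commuting with all states of the ensemble equals the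
Commuting estimator C²/Tr(C²) with C = Σᵢ pᵢ ρᵢ^{1/2}. -/
theorem fixed_point_commuting_is_commuting_estimator
    (ρ : Fin n → Matrix (Fin d) (Fin d) ℂ) (p : Fin n → ℝ)
    (σ : Matrix (Fin d) (Fin d) ℂ)
    (hρ : ∀ i, (ρ i).PosDef ∧ (ρ i).trace = 1) (hp : IsProbVec p) (hpos : ∀ i, 0 < p i)
    (hσ : σ.PosDef) (hσ1 : σ.trace = 1)
    (hfix : σ = ((∑ i, p i * fid (ρ i) σ : ℝ) : ℂ)⁻¹ •
      ∑ i, (p i : ℂ) • psqrt (psqrt σ * ρ i * psqrt σ))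
    (hcomm : ∀ i, Commute (ρ i) σ) :
    let C : Matrix (Fin d) (Fin d) ℂ := ∑ i, (p i : ℂ) • psqrt (ρ i)
    σ = ((C * C).trace)⁻¹ • (C * C) := by
  intro C
  have hC : C = ∑ i, (p i : ℂ) • psqrt (ρ i) := rfl
  have hσs : σ.PosSemidef := hσ.posSemidef
  have hps : ∀ i, (ρ i).PosSemidef := fun i => (hρ i).1.posSemidef
  set S : Matrix (Fin d) (Fin d) ℂ := hσs.sqrt with hS
  set R : Fin n → Matrix (Fin d) (Fin d) ℂ := fun i => (hps i).sqrt with hR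
  set f : ℝ := ∑ i, p i * fid (ρ i) σ with hf
  have hpsσ : psqrt σ = S := dif_pos hσs
  have hpsρ : ∀ i, psqrt (ρ i) = R i := fun i => dif_pos (hps i)
  -- commutation facts
  have hSρ : ∀ i, Commute S (ρ i) := fun i =>
    sqrt_commute_of_commute hσs (hcomm i).symm
  have hRS : ∀ i, Commute (R i) S := fun i =>
    sqrt_commute_of_commute (hps i) (hSρ i).symm
  -- key: psqrt (S ρᵢ S) = Rᵢ S
  have hY : ∀ i, (S * ρ i * S).PosSemidef := fun i => by
    have := (hps i).mul_mul_conjTranspose_same S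
    rwa [hσs.posSemidef_sqrt.1.eq] at this
  have hkey : ∀ i, psqrt (psqrt σ * ρ i * psqrt σ) = R i * S := by
    intro i
    rw [hpsσ]
    have hXpsd : (R i * S).PosSemidef :=
      posSemidef_mul_of_commute (hps i).posSemidef_sqrt hσs.posSemidef_sqrt (hRS i)
    have hsq : (R i * S) ^ 2 = S * ρ i * S := by
      have e1 : (R i * S) * (R i * S) = R i * R i * (S * S) := by
        calc (R i * S) * (R i * S) = R i * (S * R i * S) := by
              rw [Matrix.mul_assoc, Matrix.mul_assoc]
        _ = R i * (R i * S * S) := by rw [(hRS i).symm.eq]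
        _ = R i * R i * (S * S) := by
              rw [Matrix.mul_assoc (R i) S S, ← Matrix.mul_assoc]
      have e2 : S * ρ i * S = ρ i * (S * S) := by
        rw [(hSρ i).eq, Matrix.mul_assoc]
      rw [pow_two, e1, e2, (hps i).sqrt_mul_self]
    have := hXpsd.eq_sqrt_of_sq_eq (hY i) hsq
    rw [show psqrt (S * ρ i * S) = (hY i).sqrt from dif_pos (hY i)]
    exact this.symm
  -- rewrite the fixed point equation
  simp only [hkey] at hfix
  have hsum : ∑ i, (p i : ℂ) • (R i * S) = C * S := by
    rw [hC]
    simp only [hpsρ]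
    rw [Finset.sum_mul]
    simp [smul_mul_assoc]
  rw [hsum] at hfix
  -- f ≠ 0
  have hfne : ((f : ℝ) : ℂ) ≠ 0 := by
    intro h0
    rw [h0, _root_.inv_zero, zero_smul] at hfix
    rw [hfix, Matrix.trace_zero] at hσ1
    exact one_ne_zero hσ1.symm
  -- invertibility of S
  have hdS : S.det ≠ 0 := by
    have hdd : S.det * S.det = σ.det := by
      rw [← Matrix.det_mul, hσs.sqrt_mul_self]
    intro h0
    exact hσ.det_pos.ne' (by rw [← hdd, h0, mul_zero])
  -- S = f⁻¹ • C
  have h3 : S = ((f : ℝ) : ℂ)⁻¹ • C := by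
    have h2 : S * S = ((f : ℝ) : ℂ)⁻¹ • (C * S) := by
      rw [hσs.sqrt_mul_self]; exact hfix
    have e := congrArg (fun X => X * S⁻¹) h2
    simpa [Matrix.mul_assoc, Matrix.mul_nonsing_inv _ (isUnit_iff_ne_zero.mpr hdS), smul_mul_assoc] using e
  have h4 : C = ((f : ℝ) : ℂ) • S := by
    rw [h3, smul_smul, mul_inv_cancel₀ hfne, one_smul]
  have hCC : C * C = (((f : ℝ) : ℂ) * ((f : ℝ) : ℂ)) • σ := by
    rw [h4, smul_mul_assoc, mul_smul_comm, smul_smul, hσs.sqrt_mul_self]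
  rw [hCC, Matrix.trace_smul, hσ1, smul_eq_mul, mul_one, smul_smul,
    inv_mul_cancel₀ (mul_ne_zero hfne hfne), one_smul]
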